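/- Let H be a real Hilbert space and C a nonempty closed convex subset of H. Let T_1,…,T_N : C → C be closed quasi-nonexpansive mappings, each L-Lipschitz, with F = ⋂_{i=1}^N F(T_i) ≠ ∅. For n ≥ 1 set j_n = ((n−1) mod N) + 1. Let {α_n} ⊂ [0,1] with α_n → 0. Let {x_n} be generated by: x_1 ∈ C, C_1 = Q_1 = C; y_n = α_n x_1 + (1 − α_n) T_{j_n} x_n; C_n = {v ∈ C : ‖v − y_n‖² ≤ α_n‖v − x_1‖² + (1 − α_n)‖v − x_n‖²}; Q_n = {v ∈ Q_{n−1} : ⟨x_1 − x_n, x_n − v⟩ ≥ 0} for n ≥ 2; and x_{n+1} is the metric projection of x_1 onto C_n ∩ Q_n. Then {x_n} converges strongly to the metric projection of x_1 onto F. -/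

import Mathlib

open Filter Topology

section AuxHybrid
open RealInnerProductSpace
variable {H : Type*} [NormedAddCommGroup H] [InnerProductSpace ℝ H]
variable {H : Type*} [NormedAddCommGroup H] [InnerProductSpace ℝ H]

lemma aux_comb (t : ℝ) (a b p : H) :
    ‖(t•a + (1-t)•b) - p‖^2 = t*‖a-p‖^2 + (1-t)*‖b-p‖^2 - t*(1-t)*‖a-b‖^2 := by
  simp only [← real_inner_self_eq_norm_sq, inner_sub_left, inner_sub_right,
    inner_add_left, inner_add_right, real_inner_smul_left, real_inner_smul_right]
  rw [real_inner_comm p a, real_inner_comm p b, real_inner_comm b a]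
  ring

lemma aux_three (a b c : H) :
    ‖a - c‖^2 = ‖a - b‖^2 + ‖b - c‖^2 + 2*⟪a-b, b-c⟫ := by
  simp only [← real_inner_self_eq_norm_sq, inner_sub_left, inner_sub_right]
  rw [real_inner_comm c a, real_inner_comm b a, real_inner_comm c b]
  ring

lemma aux_cs_iff (β : ℝ) (yy a b v : H) :
    ‖v - yy‖^2 ≤ β*‖v - a‖^2 + (1-β)*‖v - b‖^2 ↔
      ⟪v, (2*β)•a + (2*(1-β))•b - (2:ℝ)•yy⟫ ≤ β*‖a‖^2 + (1-β)*‖b‖^2 - ‖yy‖^2 := by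
  simp only [← real_inner_self_eq_norm_sq, inner_sub_left, inner_sub_right,
    inner_add_right, real_inner_smul_right]
  rw [real_inner_comm yy v, real_inner_comm a v, real_inner_comm b v]
  constructor <;> intro h <;> nlinarith [h]


lemma aux_half_closed (c : H) (d : ℝ) : IsClosed {v : H | ⟪v, c⟫ ≤ d} :=
  isClosed_le (continuous_id.inner continuous_const) continuous_const

lemma aux_half_convex (c : H) (d : ℝ) : Convex ℝ {v : H | ⟪v, c⟫ ≤ d} :=
  convex_halfSpace_le ⟨fun a b => inner_add_left a b c, fun r a => real_inner_smul_left a c r⟩ d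

lemma aux_half_closed' (c : H) (d : ℝ) : IsClosed {v : H | ⟪c, v⟫ ≤ d} :=
  isClosed_le (continuous_const.inner continuous_id) continuous_const

lemma aux_half_convex' (c : H) (d : ℝ) : Convex ℝ {v : H | ⟪c, v⟫ ≤ d} :=
  convex_halfSpace_le ⟨fun a b => inner_add_right c a b, fun r a => real_inner_smul_right c a r⟩ d

lemma aux_var_ineq {S : Set H} (hS : Convex ℝ S) {z w : H} (hz : z ∈ S)
    (hmin : ∀ v ∈ S, ‖z - w‖ ≤ ‖v - w‖) {v : H} (hv : v ∈ S) :
    ⟪w - z, v - z⟫ ≤ 0 := by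
  have hexp : ∀ t : ℝ, ‖(z - w) + t•(v-z)‖^2
      = ‖z-w‖^2 + 2*(t*⟪z-w, v-z⟫) + t^2*‖v-z‖^2 := by
    intro t
    rw [norm_add_sq_real, real_inner_smul_right, norm_smul]
    simp [mul_pow, sq_abs]; try ring
  have key : ∀ t : ℝ, 0 < t → t ≤ 1 → 2*⟪w - z, v - z⟫ ≤ t * ‖v - z‖^2 := by
    intro t ht ht1
    have hmem : (1-t)•z + t•v ∈ S := hS hz hv (by linarith) ht.le (by ring)
    have h1 : ‖z - w‖ ≤ ‖(1-t)•z + t•v - w‖ := hmin _ hmem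
    have h2 : (1-t)•z + t•v - w = (z - w) + t•(v-z) := by
      module
    have h3 : ‖z - w‖^2 ≤ ‖(z - w) + t•(v-z)‖^2 := by
      rw [← h2]; exact pow_le_pow_left₀ (norm_nonneg _) h1 2
    rw [hexp t] at h3
    have h4 : 0 ≤ 2*(t*⟪z-w, v-z⟫) + t^2*‖v-z‖^2 := by linarith
    have h5 : ⟪w - z, v - z⟫ = -⟪z-w, v-z⟫ := by
      rw [← inner_neg_left]; congr 1; abel
    rw [h5]
    have := mul_le_mul_of_nonneg_left h4 (le_of_lt (inv_pos.mpr ht))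
    rw [mul_zero] at this
    field_simp at this ⊢
    nlinarith
  set c := ⟪w - z, v - z⟫ with hc
  set K := ‖v - z‖^2 with hKdef
  have hK0 : 0 ≤ K := sq_nonneg _
  by_contra hcpos
  push_neg at hcpos
  rcases eq_or_lt_of_le hK0 with hK' | hK'
  · have := key 1 one_pos le_rfl; rw [← hK'] at this; linarith
  · have ht : 0 < min 1 (c/K) := lt_min one_pos (div_pos hcpos hK')
    have h1 := key _ ht (min_le_left _ _)
    have h2 : min 1 (c/K) * K ≤ (c/K)*K :=
      mul_le_mul_of_nonneg_right (min_le_right _ _) hK0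
    rw [div_mul_cancel₀ _ (ne_of_gt hK')] at h2
    linarith

end AuxHybrid

open RealInnerProductSpace in
/-- Sequential hybrid method for a finite family of closed, Lipschitz,
quasi-nonexpansive mappings in a real Hilbert space (Theorem 3.12, Hilbert-space
form). For `n ≥ 1`, `jₙ = ((n-1) % N) + 1` is represented by the index
`⟨(n-1) % N, _⟩ : Fin N`. -/
theorem stmt_7
    {H : Type*} [NormedAddCommGroup H] [InnerProductSpace ℝ H] [CompleteSpace H]
    (C : Set H) (hCne : C.Nonempty) (hCcl : IsClosed C) (hCcv : Convex ℝ C)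
    (N : ℕ) (hN : 0 < N) (T : Fin N → H → H) (hTmaps : ∀ i, Set.MapsTo (T i) C C)
    (hQN : ∀ i, ∀ p ∈ C, T i p = p → ∀ x ∈ C, ‖p - T i x‖ ≤ ‖p - x‖)
    (hTclosed : ∀ i, ∀ (u : ℕ → H) (p q : H), (∀ n, u n ∈ C) → p ∈ C →
      Tendsto u atTop (𝓝 p) → Tendsto (fun n => T i (u n)) atTop (𝓝 q) → T i p = q)
    (L : ℝ) (hLip : ∀ i, ∀ x ∈ C, ∀ y ∈ C, ‖T i x - T i y‖ ≤ L * ‖x - y‖)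
    (F : Set H) (hF : F = ⋂ i, {x ∈ C | T i x = x}) (hFne : F.Nonempty)
    (α : ℕ → ℝ) (hα : ∀ n, α n ∈ Set.Icc (0 : ℝ) 1) (hαlim : Tendsto α atTop (𝓝 0))
    (x : ℕ → H) (y : ℕ → H) (CS QS : ℕ → Set H)
    (hx1 : x 1 ∈ C) (hQS1 : QS 1 = C)
    (hy : ∀ n, 1 ≤ n →
      y n = α n • x 1 + (1 - α n) • T ⟨(n - 1) % N, Nat.mod_lt _ hN⟩ (x n))
    (hCS : ∀ n, 1 ≤ n → CS n =
      {v ∈ C | ‖v - y n‖ ^ 2 ≤ α n * ‖v - x 1‖ ^ 2 + (1 - α n) * ‖v - x n‖ ^ 2})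
    (hQS : ∀ n, 1 ≤ n → QS (n + 1) =
      {v ∈ QS n | 0 ≤ (inner ℝ (x 1 - x (n + 1)) (x (n + 1) - v) : ℝ)})
    (hproj : ∀ n, 1 ≤ n → x (n + 1) ∈ CS n ∩ QS n ∧
      ∀ v ∈ CS n ∩ QS n, ‖x (n + 1) - x 1‖ ≤ ‖v - x 1‖) :
    ∃ z ∈ F, (∀ v ∈ F, ‖z - x 1‖ ≤ ‖v - x 1‖) ∧ Tendsto x atTop (𝓝 z) := by
  obtain ⟨p₀, hp₀⟩ := hFne
  have hFmem : ∀ p ∈ F, p ∈ C ∧ ∀ i, T i p = p := by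
    intro p hp
    rw [hF] at hp
    simp only [Set.mem_iInter, Set.mem_setOf_eq] at hp
    exact ⟨(hp ⟨0, hN⟩).1, fun i => (hp i).2⟩
  have hp₀C : p₀ ∈ C := (hFmem p₀ hp₀).1
  have hCSsub : ∀ n, 1 ≤ n → CS n ⊆ C := by
    intro n hn
    rw [hCS n hn]; exact fun v hv => hv.1
  have hxC : ∀ n, 1 ≤ n → x n ∈ C := by
    intro n hn
    match n, hn with
    | 1, _ => exact hx1
    | (m+2), _ =>
      exact hCSsub (m+1) (Nat.le_add_left 1 m) (hproj (m+1) (Nat.le_add_left 1 m)).1.1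
  -- CS n is closed, convex, and contains F
  have hCSprop : ∀ n, 1 ≤ n → IsClosed (CS n) ∧ Convex ℝ (CS n) ∧ F ⊆ CS n := by
    intro n hn
    have hset : CS n = C ∩ {v : H | ⟪v, (2*α n)•(x 1) + (2*(1-α n))•(x n) - (2:ℝ)•(y n)⟫
        ≤ α n*‖x 1‖^2 + (1-α n)*‖x n‖^2 - ‖y n‖^2} := by
      rw [hCS n hn]
      ext v
      simp only [Set.mem_setOf_eq, Set.mem_inter_iff]
      rw [aux_cs_iff]
    refine ⟨?_, ?_, ?_⟩
    · rw [hset]; exact hCcl.inter (aux_half_closed _ _)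
    · rw [hset]; exact hCcv.inter (aux_half_convex _ _)
    · intro p hp
      obtain ⟨hpC, hpfix⟩ := hFmem p hp
      rw [hCS n hn]
      refine ⟨hpC, ?_⟩
      set j : Fin N := ⟨(n - 1) % N, Nat.mod_lt _ hN⟩
      set w := T j (x n) with hw
      have h1 : ‖p - y n‖^2 = α n * ‖x 1 - p‖^2 + (1-α n)*‖w - p‖^2
          - (α n)*(1-α n)*‖x 1 - w‖^2 := by
        rw [norm_sub_rev, hy n hn, aux_comb]
      have h2 : ‖w - p‖ ≤ ‖p - x n‖ := by
        rw [norm_sub_rev]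
        exact hQN j p hpC (hpfix j) (x n) (hxC n hn)
      have h3 : ‖w - p‖^2 ≤ ‖p - x n‖^2 :=
        pow_le_pow_left₀ (norm_nonneg _) h2 2
      have hα0 := (hα n).1
      have hα1 := (hα n).2
      have h4 : ‖x 1 - p‖^2 = ‖p - x 1‖^2 := by rw [norm_sub_rev]
      have h8 : 0 ≤ α n * (1 - α n) * ‖x 1 - w‖^2 :=
        mul_nonneg (mul_nonneg hα0 (by linarith)) (sq_nonneg _)
      have h9 : (1 - α n) * ‖w - p‖^2 ≤ (1 - α n) * ‖p - x n‖^2 :=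
        mul_le_mul_of_nonneg_left h3 (by linarith)
      have h4' : α n * ‖x 1 - p‖^2 = α n * ‖p - x 1‖^2 := by rw [h4]
      linarith
  -- QS n is closed, convex, and contains F
  have hQSprop : ∀ n, 1 ≤ n → IsClosed (QS n) ∧ Convex ℝ (QS n) ∧ F ⊆ QS n := by
    intro n hn
    induction n, hn using Nat.le_induction with
    | base =>
      rw [hQS1]
      exact ⟨hCcl, hCcv, fun p hp => (hFmem p hp).1⟩
    | succ n hn ih =>
      have hset : QS (n+1) = QS n ∩
          {v : H | ⟪x 1 - x (n+1), v⟫ ≤ ⟪x 1 - x (n+1), x (n+1)⟫} := by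
        rw [hQS n hn]
        ext v
        simp only [Set.mem_setOf_eq, Set.mem_inter_iff]
        rw [inner_sub_right]
        constructor
        · rintro ⟨h1, h2⟩; exact ⟨h1, by linarith⟩
        · rintro ⟨h1, h2⟩; exact ⟨h1, by linarith⟩
      refine ⟨?_, ?_, ?_⟩
      · rw [hset]; exact ih.1.inter (aux_half_closed' _ _)
      · rw [hset]; exact ih.2.1.inter (aux_half_convex' _ _)
      · intro p hp
        rw [hQS n hn]
        refine ⟨ih.2.2 hp, ?_⟩
        have hconv : Convex ℝ (CS n ∩ QS n) := (hCSprop n hn).2.1.inter ih.2.1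
        have hpmem : p ∈ CS n ∩ QS n := ⟨(hCSprop n hn).2.2 hp, ih.2.2 hp⟩
        have hvi := aux_var_ineq hconv (hproj n hn).1 (hproj n hn).2 hpmem
        rw [show x (n+1) - p = -(p - x (n+1)) by abel, inner_neg_right]
        linarith
  have hQSmono : ∀ n, 1 ≤ n → QS (n+1) ⊆ QS n := by
    intro n hn; rw [hQS n hn]; exact fun v hv => hv.1
  have hQSchain : ∀ n, 1 ≤ n → ∀ m, n ≤ m → QS m ⊆ QS n := by
    intro n hn m hm
    induction m, hm using Nat.le_induction with
    | base => exact subset_rfl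
    | succ m hm ih => exact (hQSmono m (hn.trans hm)).trans ih
  have hxQ : ∀ n, 1 ≤ n → x (n+1) ∈ QS (n+1) := by
    intro n hn
    rw [hQS n hn]
    exact ⟨(hproj n hn).1.2, by simp⟩
  -- key inequality
  have hKey : ∀ n, 1 ≤ n → ∀ v ∈ QS (n+1),
      ‖x (n+1) - x 1‖^2 + ‖v - x (n+1)‖^2 ≤ ‖v - x 1‖^2 := by
    intro n hn v hv
    rw [hQS n hn] at hv
    obtain ⟨-, hinner⟩ := hv
    have h1 := aux_three v (x (n+1)) (x 1)
    have h2 : ⟪v - x (n+1), x (n+1) - x 1⟫ = ⟪x 1 - x (n+1), x (n+1) - v⟫ := by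
      rw [show v - x (n+1) = -(x (n+1) - v) by abel,
        show x (n+1) - x 1 = -(x 1 - x (n+1)) by abel, inner_neg_neg, real_inner_comm]
    linarith
  have hbound : ∀ n, 1 ≤ n → ‖x (n+1) - x 1‖ ≤ ‖p₀ - x 1‖ := by
    intro n hn
    exact (hproj n hn).2 p₀ ⟨(hCSprop n hn).2.2 hp₀, (hQSprop n hn).2.2 hp₀⟩
  have hbound' : ∀ n, 1 ≤ n → ‖x n - x 1‖ ≤ ‖p₀ - x 1‖ := by
    intro n hn
    match n, hn with
    | 1, _ => simpa using norm_nonneg (p₀ - x 1)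
    | (m+2), _ => exact hbound (m+1) (Nat.le_add_left 1 m)
  set s : ℕ → ℝ := fun n => ‖x (n+2) - x 1‖^2 with hs
  have hdiff : ∀ m k, k ≤ m → ‖x (m+2) - x (k+2)‖^2 ≤ s m - s k := by
    intro m k hkm
    have hmem : x (m+2) ∈ QS (k+2) := by
      refine hQSchain (k+2) (by omega) (m+2) (by omega) ?_
      exact hxQ (m+1) (Nat.le_add_left 1 m)
    have := hKey (k+1) (Nat.le_add_left 1 k) (x (m+2)) hmem
    simp only [hs]
    have e1 : k + 1 + 1 = k + 2 := by ring
    rw [e1] at this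
    linarith
  have hs_mono : Monotone s := by
    apply monotone_nat_of_le_succ
    intro n
    have := hdiff (n+1) n (Nat.le_succ n)
    nlinarith [sq_nonneg ‖x (n+1+2) - x (n+2)‖]
  have hs_bdd : BddAbove (Set.range s) := by
    refine ⟨‖p₀ - x 1‖^2, ?_⟩
    rintro r ⟨n, rfl⟩
    exact pow_le_pow_left₀ (norm_nonneg _) (hbound (n+1) (Nat.le_add_left 1 n)) 2
  have hs_conv : Tendsto s atTop (𝓝 (⨆ n, s n)) := tendsto_atTop_ciSup hs_mono hs_bdd
  have hs_cauchy : CauchySeq s := hs_conv.cauchySeq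
  have hx_cauchy : CauchySeq (fun n => x (n+2)) := by
    rw [Metric.cauchySeq_iff]
    intro ε hε
    obtain ⟨M, hM⟩ := Metric.cauchySeq_iff.mp hs_cauchy (ε^2) (by positivity)
    refine ⟨M, fun m hm k hk => ?_⟩
    rcases le_total k m with h | h
    · have h1 := hdiff m k h
      have h2 := hM m hm k hk
      rw [Real.dist_eq] at h2
      have h3 : ‖x (m+2) - x (k+2)‖^2 < ε^2 := by
        have : s m - s k ≤ |s m - s k| := le_abs_self _
        linarith
      rw [dist_eq_norm]
      exact lt_of_pow_lt_pow_left₀ 2 hε.le h3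
    · have h1 := hdiff k m h
      have h2 := hM k hk m hm
      rw [Real.dist_eq] at h2
      have h3 : ‖x (k+2) - x (m+2)‖^2 < ε^2 := by
        have : s k - s m ≤ |s k - s m| := le_abs_self _
        linarith
      rw [dist_eq_norm, ← norm_neg]
      have e : -(x (m+2) - x (k+2)) = x (k+2) - x (m+2) := by abel
      rw [e]
      exact lt_of_pow_lt_pow_left₀ 2 hε.le h3
  obtain ⟨z, hz2⟩ := cauchySeq_tendsto_of_complete hx_cauchy
  have hxz : Tendsto x atTop (𝓝 z) := (tendsto_add_atTop_iff_nat 2).mp hz2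
  have hxz1 : Tendsto (fun n => x (n+1)) atTop (𝓝 z) := (tendsto_add_atTop_iff_nat 1).mpr hxz
  have hzC : z ∈ C :=
    hCcl.mem_of_tendsto hxz (eventually_atTop.mpr ⟨1, hxC⟩)
  -- differences tend to zero
  have hd1 : Tendsto (fun n => ‖x (n+1) - x n‖) atTop (𝓝 0) := by
    have := (hxz1.sub hxz).norm
    simpa using this
  set Tn : ℕ → H := fun n => T ⟨(n - 1) % N, Nat.mod_lt _ hN⟩ (x n) with hTn
  have hB : ∀ n, 1 ≤ n → ‖x (n+1) - x 1‖^2 ≤ ‖p₀ - x 1‖^2 := fun n hn =>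
    pow_le_pow_left₀ (norm_nonneg _) (hbound n hn) 2
  have hyx_sq : Tendsto (fun n => ‖x (n+1) - y n‖^2) atTop (𝓝 0) := by
    have hub : ∀ n, 1 ≤ n →
        ‖x (n+1) - y n‖^2 ≤ α n * ‖p₀ - x 1‖^2 + ‖x (n+1) - x n‖^2 := by
      intro n hn
      have hmem := (hproj n hn).1.1
      rw [hCS n hn] at hmem
      obtain ⟨-, hineq⟩ := hmem
      have hα0 := (hα n).1
      have hα1 := (hα n).2
      have h1 : α n * ‖x (n+1) - x 1‖^2 ≤ α n * ‖p₀ - x 1‖^2 :=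
        mul_le_mul_of_nonneg_left (hB n hn) hα0
      nlinarith [sq_nonneg ‖x (n+1) - x n‖]
    have hg : Tendsto (fun n => α n * ‖p₀ - x 1‖^2 + ‖x (n+1) - x n‖^2) atTop (𝓝 0) := by
      have h1 : Tendsto (fun n => α n * ‖p₀ - x 1‖^2) atTop (𝓝 0) := by
        simpa using hαlim.mul_const (‖p₀ - x 1‖^2)
      have h2 : Tendsto (fun n => ‖x (n+1) - x n‖^2) atTop (𝓝 0) := by
        have := hd1.pow 2
        simpa using this
      simpa using h1.add h2
    refine squeeze_zero' (Eventually.of_forall fun n => sq_nonneg _)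
      (eventually_atTop.mpr ⟨1, hub⟩) hg
  have hyx : Tendsto (fun n => ‖x (n+1) - y n‖) atTop (𝓝 0) := by
    have := (Real.continuous_sqrt.tendsto 0).comp hyx_sq
    have heq : (fun n => Real.sqrt (‖x (n+1) - y n‖^2)) = fun n => ‖x (n+1) - y n‖ :=
      funext fun n => Real.sqrt_sq (norm_nonneg _)
    rw [Function.comp_def, heq] at this
    simpa using this
  have hyTn : Tendsto (fun n => ‖y n - Tn n‖) atTop (𝓝 0) := by
    have hub : ∀ n, 1 ≤ n → ‖y n - Tn n‖ ≤ α n * (3 * ‖p₀ - x 1‖) := by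
      intro n hn
      have hα0 := (hα n).1
      have h1 : y n - Tn n = α n • (x 1 - Tn n) := by
        rw [hy n hn]
        simp only [hTn]
        rw [sub_smul, one_smul, smul_sub]
        abel
      rw [h1, norm_smul, Real.norm_eq_abs, abs_of_nonneg hα0]
      have h2 : ‖p₀ - Tn n‖ ≤ ‖p₀ - x n‖ :=
        hQN _ p₀ hp₀C ((hFmem p₀ hp₀).2 _) (x n) (hxC n hn)
      have h3 : ‖p₀ - x n‖ ≤ ‖p₀ - x 1‖ + ‖x n - x 1‖ := by
        have := norm_sub_le (p₀ - x 1) (x n - x 1)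
        have e : (p₀ - x 1) - (x n - x 1) = p₀ - x n := by abel
        rw [e] at this
        exact this
      have h4 := hbound' n hn
      have h5 : ‖x 1 - Tn n‖ ≤ ‖x 1 - p₀‖ + ‖p₀ - Tn n‖ := norm_sub_le_norm_sub_add_norm_sub _ _ _
      have h6 : ‖x 1 - p₀‖ = ‖p₀ - x 1‖ := norm_sub_rev _ _
      have h7 : ‖x 1 - Tn n‖ ≤ 3 * ‖p₀ - x 1‖ := by linarith
      exact mul_le_mul_of_nonneg_left h7 hα0
    have hg : Tendsto (fun n => α n * (3 * ‖p₀ - x 1‖)) atTop (𝓝 0) := by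
      simpa using hαlim.mul_const (3 * ‖p₀ - x 1‖)
    exact squeeze_zero' (Eventually.of_forall fun n => norm_nonneg _)
      (eventually_atTop.mpr ⟨1, hub⟩) hg
  have hTnz : Tendsto Tn atTop (𝓝 z) := by
    have h1 : Tendsto (fun n => x (n+1) - y n) atTop (𝓝 0) :=
      tendsto_zero_iff_norm_tendsto_zero.mpr hyx
    have h2 : Tendsto (fun n => y n - Tn n) atTop (𝓝 0) :=
      tendsto_zero_iff_norm_tendsto_zero.mpr hyTn
    have h3 : Tendsto (fun n => x (n+1) - ((x (n+1) - y n) + (y n - Tn n))) atTop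
        (𝓝 (z - (0 + 0))) := hxz1.sub (h1.add h2)
    have heq : (fun n => x (n+1) - ((x (n+1) - y n) + (y n - Tn n))) = Tn :=
      funext fun n => by abel
    rw [heq] at h3
    simpa using h3
  -- z is a fixed point of every T i
  have hfix : ∀ i : Fin N, T i z = z := by
    intro i
    have hidx_tend : Tendsto (fun k => k * N + i.val + 1) atTop atTop := by
      apply tendsto_atTop_mono (fun k => ?_) tendsto_id
      have h := Nat.le_mul_of_pos_right k hN
      simp only [id_eq]
      omega
    have hfin : ∀ k, (⟨(k * N + i.val + 1 - 1) % N, Nat.mod_lt _ hN⟩ : Fin N) = i := by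
      intro k
      apply Fin.ext
      show (k * N + i.val + 1 - 1) % N = i.val
      rw [Nat.add_sub_cancel, Nat.add_comm, Nat.add_mul_mod_self_right, Nat.mod_eq_of_lt i.isLt]
    have hu_tend : Tendsto (fun k => x (k * N + i.val + 1)) atTop (𝓝 z) :=
      hxz.comp hidx_tend
    have hTu : Tendsto (fun k => T i (x (k * N + i.val + 1))) atTop (𝓝 z) := by
      have h1 : Tendsto (fun k => Tn (k * N + i.val + 1)) atTop (𝓝 z) :=
        hTnz.comp hidx_tend
      have heq : (fun k => Tn (k * N + i.val + 1))
          = fun k => T i (x (k * N + i.val + 1)) := by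
        funext k
        show T ⟨(k * N + i.val + 1 - 1) % N, Nat.mod_lt _ hN⟩ (x (k * N + i.val + 1)) = _
        rw [hfin k]
      rw [heq] at h1
      exact h1
    have huC : ∀ k, x (k * N + i.val + 1) ∈ C := fun k => hxC _ (Nat.le_add_left 1 _)
    exact hTclosed i _ z z huC hzC hu_tend hTu
  have hzF : z ∈ F := by
    rw [hF]
    exact Set.mem_iInter.mpr fun i => ⟨hzC, hfix i⟩
  refine ⟨z, hzF, ?_, hxz⟩
  intro v hv
  have hvm : ∀ n, 1 ≤ n → ‖x (n+1) - x 1‖ ≤ ‖v - x 1‖ := fun n hn =>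
    (hproj n hn).2 v ⟨(hCSprop n hn).2.2 hv, (hQSprop n hn).2.2 hv⟩
  have hnorm_tend : Tendsto (fun n => ‖x (n+1) - x 1‖) atTop (𝓝 ‖z - x 1‖) :=
    (hxz1.sub tendsto_const_nhds).norm
  exact le_of_tendsto hnorm_tend (eventually_atTop.mpr ⟨1, hvm⟩)
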